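/- For x ≥ 6 and ℓ ∈ {0,1,2}, setting j₀ = ⌊log x / log 2⌋, the quantity R_ℓ(x) = ∑_{i=0}^{ℓ} binom(ℓ,i) (log x)^{ℓ−i} ∫_{−∞}^{∞} (∫₀^{3/2^{j₀}} (log u)^i e(−βu) du) (∫₀^1 e(βv²) dv)³ dβ satisfies |R_ℓ(x)| ≪_ℓ x^{−1} (log x)⁴. -/

import Mathlib

/-- `e(x) = exp(2πix)` -/
noncomputable def e (x : ℝ) : ℂ := Complex.exp (2 * Real.pi * Complex.I * x)

/-- The remainder
`R_ℓ(x) = ∑_{i=0}^{ℓ} C(ℓ,i) (log x)^{ℓ−i} ∫_ℝ (∫₀^{3/2^{j₀}} (log u)^i e(−βu) du)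
(∫₀^1 e(βv²) dv)³ dβ` with `j₀ = ⌊log x / log 2⌋`. -/
noncomputable def Rrem (ℓ : ℕ) (x : ℝ) : ℂ :=
  ∑ i ∈ Finset.range (ℓ + 1),
    ((ℓ.choose i : ℝ) : ℂ) * ((Real.log x : ℝ) : ℂ) ^ (ℓ - i) *
      ∫ β : ℝ,
        (∫ u in (0 : ℝ)..(3 / 2 ^ (⌊Real.log x / Real.log 2⌋₊)),
            ((Real.log u : ℝ) : ℂ) ^ i * e (-(β * u))) *
        (∫ v in (0 : ℝ)..1, e (β * v ^ 2)) ^ 3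

open MeasureTheory intervalIntegral Set
open scoped Interval

lemma norm_e (t : ℝ) : ‖e t‖ = 1 := by
  simp [e, Complex.norm_exp]

lemma e_neg (t : ℝ) : e (-t) = (starRingEnd ℂ) (e t) := by
  rw [e, e, ← Complex.exp_conj]
  congr 1
  simp only [map_mul, Complex.conj_I, Complex.conj_ofReal, map_ofNat]
  push_cast
  ring

lemma interval_integral_conj {f : ℝ → ℂ} {a b : ℝ} :
    (∫ v in a..b, (starRingEnd ℂ) (f v)) = (starRingEnd ℂ) (∫ v in a..b, f v) := by
  simp only [intervalIntegral, ← integral_conj, map_sub]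

noncomputable def vI (β : ℝ) : ℂ := ∫ v in (0:ℝ)..1, e (β * v ^ 2)

lemma e_cont : Continuous e := by
  unfold e; fun_prop

lemma vI_norm_le_one (β : ℝ) : ‖vI β‖ ≤ 1 := by
  have := intervalIntegral.norm_integral_le_of_norm_le_const
    (a := (0:ℝ)) (b := 1) (C := 1) (f := fun v => e (β * v ^ 2))
    (fun x _ => le_of_eq (norm_e _))
  simpa [vI] using this

lemma vI_neg_norm (β : ℝ) : ‖vI (-β)‖ = ‖vI β‖ := by
  have h : vI (-β) = (starRingEnd ℂ) (vI β) := by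
    rw [vI, vI, ← interval_integral_conj]
    congr 1; funext v
    rw [← e_neg]; ring_nf
  rw [h, RCLike.norm_conj]

lemma e_sq (β t : ℝ) : e (β * t ^ 2) = Complex.exp ((2 * Real.pi * β * Complex.I) * (t:ℂ) ^ 2) := by
  rw [e]; congr 1; push_cast; ring

lemma vI_decay {β : ℝ} (hβ : 4 ≤ β) : ‖vI β‖ ≤ 2 / Real.sqrt β := by
  have hβ0 : (0:ℝ) < β := by linarith
  have hπ : (0:ℝ) < Real.pi := Real.pi_pos
  have hs2 : (2:ℝ) ≤ Real.sqrt β := by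
    have : Real.sqrt 4 ≤ Real.sqrt β := Real.sqrt_le_sqrt hβ
    rwa [show (4:ℝ) = 2^2 by norm_num, Real.sqrt_sq (by norm_num : (0:ℝ) ≤ 2)] at this
  have hs0 : (0:ℝ) < Real.sqrt β := by linarith
  have hssq : Real.sqrt β * Real.sqrt β = β := Real.mul_self_sqrt (le_of_lt hβ0)
  set ε : ℝ := (Real.sqrt β)⁻¹ with hεdef
  have hε0 : 0 < ε := inv_pos.2 hs0
  have hε1' : ε ≤ 1 := by
    rw [hεdef, show (1:ℝ) = (1:ℝ)⁻¹ by norm_num]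
    exact inv_anti₀ (by norm_num) (by linarith)
  set k : ℂ := 2 * Real.pi * β * Complex.I with hk
  have hknorm : ‖k‖ = 2 * Real.pi * β := by
    rw [hk]
    simp [abs_of_pos hπ, abs_of_pos hβ0]
  have hk0 : k ≠ 0 := by
    intro h
    rw [h, norm_zero] at hknorm
    nlinarith
  have h2knorm : ‖2*k‖ = 4 * Real.pi * β := by
    rw [norm_mul, hknorm, show ‖(2:ℂ)‖ = 2 by simp]
    ring
  have hcont : ∀ a b : ℝ, IntervalIntegrable (fun v => e (β * v ^ 2)) volume a b :=
    fun a b => (e_cont.comp (by continuity)).intervalIntegrable a b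
  have hsplit : vI β = (∫ v in (0:ℝ)..ε, e (β * v ^ 2)) + ∫ v in ε..1, e (β * v ^ 2) := by
    rw [vI, ← intervalIntegral.integral_add_adjacent_intervals (hcont 0 ε) (hcont ε 1)]
  have h1 : ‖∫ v in (0:ℝ)..ε, e (β * v ^ 2)‖ ≤ ε := by
    have := intervalIntegral.norm_integral_le_of_norm_le_const
      (a := (0:ℝ)) (b := ε) (C := 1) (f := fun v => e (β * v ^ 2))
      (fun x _ => le_of_eq (norm_e _))
    simpa [abs_of_pos hε0] using this
  set u : ℝ → ℂ := fun v => (2*k)⁻¹ * ((v:ℂ))⁻¹ with hu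
  set u' : ℝ → ℂ := fun v => (2*k)⁻¹ * (-(((v:ℂ))^2)⁻¹) with hu'
  set φ : ℝ → ℂ := fun t => Complex.exp (k * (t:ℂ)^2) with hφ
  set φ' : ℝ → ℂ := fun t => Complex.exp (k * (t:ℂ)^2) * (k * (2*(t:ℂ))) with hφ'
  have hφnorm : ∀ t : ℝ, ‖φ t‖ = 1 := by
    intro t
    show ‖Complex.exp (k * (t:ℂ)^2)‖ = 1
    rw [hk, ← e_sq, norm_e]
  have huIcc : ∀ x : ℝ, x ∈ [[ε, (1:ℝ)]] → (0:ℝ) < x := by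
    intro x hx
    rw [uIcc_of_le hε1'] at hx
    exact lt_of_lt_of_le hε0 hx.1
  have hucont : ContinuousOn u [[ε, (1:ℝ)]] := by
    apply ContinuousOn.mul continuousOn_const
    apply ContinuousOn.inv₀ (Complex.continuous_ofReal.continuousOn)
    intro x hx
    exact_mod_cast ne_of_gt (huIcc x hx)
  have hφcont : ContinuousOn φ [[ε, (1:ℝ)]] := by
    apply Continuous.continuousOn
    fun_prop
  have hud : ∀ x ∈ [[ε, (1:ℝ)]], HasDerivAt u (u' x) x := by
    intro x hx
    have hx0 : (x:ℂ) ≠ 0 := by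
      exact_mod_cast ne_of_gt (huIcc x hx)
    exact ((hasDerivAt_inv hx0).comp_ofReal).const_mul ((2*k)⁻¹)
  have hφd : ∀ x ∈ [[ε, (1:ℝ)]], HasDerivAt φ (φ' x) x := by
    intro x _
    have h3 : HasDerivAt (fun z : ℂ => Complex.exp (k * z^2))
        (Complex.exp (k * (x:ℂ)^2) * (k * (2*(x:ℂ)))) (x:ℂ) := by
      have h2 : HasDerivAt (fun z : ℂ => k * z^2) (k * (2*(x:ℂ))) (x:ℂ) := by
        simpa [mul_comm] using ((hasDerivAt_pow 2 (x:ℂ)).const_mul k)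
      exact h2.cexp
    exact h3.comp_ofReal
  have hu'int : IntervalIntegrable u' volume ε 1 := by
    apply ContinuousOn.intervalIntegrable
    apply ContinuousOn.mul continuousOn_const
    apply ContinuousOn.neg
    apply ContinuousOn.inv₀
    · fun_prop
    · intro x hx
      exact pow_ne_zero 2 (by exact_mod_cast ne_of_gt (huIcc x hx))
  have hφ'int : IntervalIntegrable φ' volume ε 1 := by
    apply Continuous.intervalIntegrable
    fun_prop
  have hibp := intervalIntegral.integral_mul_deriv_eq_deriv_mul hud hφd hu'int hφ'int
  have hcongr : (∫ v in ε..1, e (β * v ^ 2)) = ∫ x in ε..1, u x * φ' x := by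
    apply intervalIntegral.integral_congr
    intro x hx
    have hx0 : (x:ℂ) ≠ 0 := by exact_mod_cast ne_of_gt (huIcc x hx)
    show e (β * x ^ 2) = u x * φ' x
    rw [e_sq, ← hk]
    show Complex.exp (k * (x:ℂ)^2) = (2*k)⁻¹ * ((x:ℂ))⁻¹ * (Complex.exp (k * (x:ℂ)^2) * (k * (2*(x:ℂ))))
    field_simp
  have hb1 : ‖u 1 * φ 1‖ = (4 * Real.pi * β)⁻¹ := by
    rw [norm_mul, hφnorm, mul_one]
    show ‖(2*k)⁻¹ * ((1:ℝ):ℂ)⁻¹‖ = _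
    rw [norm_mul, norm_inv, norm_inv, h2knorm]
    simp
  have hbε : ‖u ε * φ ε‖ = (4 * Real.pi * β)⁻¹ * ε⁻¹ := by
    rw [norm_mul, hφnorm, mul_one]
    show ‖(2*k)⁻¹ * ((ε:ℝ):ℂ)⁻¹‖ = _
    rw [norm_mul, norm_inv, norm_inv, h2knorm, Complex.norm_real, Real.norm_eq_abs,
      abs_of_pos hε0]
  have hrem : ‖∫ x in ε..1, u' x * φ x‖ ≤ (4 * Real.pi * β)⁻¹ * ε⁻¹ := by
    have hptwise : ∀ᵐ t ∂(volume.restrict (Ι ε (1:ℝ))), ‖u' t * φ t‖ ≤ (4 * Real.pi * β)⁻¹ * (t^2)⁻¹ := by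
      apply ae_of_all
      intro t
      rw [norm_mul, hφnorm, mul_one]
      show ‖(2*k)⁻¹ * (-(((t:ℂ))^2)⁻¹)‖ ≤ _
      rw [norm_mul, norm_inv, h2knorm, norm_neg, norm_inv, norm_pow, Complex.norm_real,
        Real.norm_eq_abs, sq_abs]
    have hgint : IntervalIntegrable (fun t : ℝ => (4 * Real.pi * β)⁻¹ * (t^2)⁻¹) volume ε 1 := by
      apply ContinuousOn.intervalIntegrable
      apply ContinuousOn.mul continuousOn_const
      apply ContinuousOn.inv₀ (by fun_prop)
      intro x hx
      have := huIcc x hx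
      positivity
    have hval : (∫ t in ε..1, (4 * Real.pi * β)⁻¹ * (t^2)⁻¹) = (4 * Real.pi * β)⁻¹ * (ε⁻¹ - 1) := by
      rw [intervalIntegral.integral_const_mul]
      congr 1
      have h0 : (0:ℝ) ∉ [[ε, (1:ℝ)]] := fun h => lt_irrefl 0 (huIcc 0 h)
      have := integral_zpow (a := ε) (b := 1) (n := -2) (Or.inr ⟨by norm_num, h0⟩)
      have heq : (∫ t in ε..1, (t^2)⁻¹) = ∫ t in ε..1, t ^ (-2:ℤ) := by
        apply intervalIntegral.integral_congr
        intro x hx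
        have hx0 : x ≠ 0 := ne_of_gt (huIcc x hx)
        simp [zpow_neg, zpow_ofNat]
      rw [heq, this]
      have hε' : ε ≠ 0 := ne_of_gt hε0
      norm_num
      field_simp
      ring
    calc ‖∫ x in ε..1, u' x * φ x‖ ≤ |∫ t in ε..1, (4 * Real.pi * β)⁻¹ * (t^2)⁻¹| :=
          intervalIntegral.norm_integral_le_abs_of_norm_le hptwise hgint
      _ = (4 * Real.pi * β)⁻¹ * (ε⁻¹ - 1) := by
          rw [hval]
          apply abs_of_nonneg
          have h7 : (1:ℝ) ≤ ε⁻¹ := by rw [hεdef, inv_inv]; linarith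
          apply mul_nonneg (by positivity) (by linarith)
      _ ≤ (4 * Real.pi * β)⁻¹ * ε⁻¹ := by
          apply mul_le_mul_of_nonneg_left _ (by positivity)
          have : (0:ℝ) < ε⁻¹ := inv_pos.2 hε0
          linarith
  have h2 : ‖∫ v in ε..1, e (β * v ^ 2)‖ ≤ (4 * Real.pi * β)⁻¹ + 2 * ((4 * Real.pi * β)⁻¹ * ε⁻¹) := by
    rw [hcongr, hibp]
    calc ‖u 1 * φ 1 - u ε * φ ε - ∫ x in ε..1, u' x * φ x‖
        ≤ ‖u 1 * φ 1 - u ε * φ ε‖ + ‖∫ x in ε..1, u' x * φ x‖ := norm_sub_le _ _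
      _ ≤ (‖u 1 * φ 1‖ + ‖u ε * φ ε‖) + ‖∫ x in ε..1, u' x * φ x‖ := by
          gcongr; exact norm_sub_le _ _
      _ ≤ ((4 * Real.pi * β)⁻¹ + (4 * Real.pi * β)⁻¹ * ε⁻¹) + (4 * Real.pi * β)⁻¹ * ε⁻¹ := by
          rw [hb1, hbε]; gcongr
      _ = (4 * Real.pi * β)⁻¹ + 2 * ((4 * Real.pi * β)⁻¹ * ε⁻¹) := by ring
  -- assemble
  have hεinv : ε⁻¹ = Real.sqrt β := by rw [hεdef, inv_inv]
  have hπ3 : (3:ℝ) ≤ Real.pi := by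
    have := Real.pi_gt_three
    linarith
  have hfinal : ε + ((4 * Real.pi * β)⁻¹ + 2 * ((4 * Real.pi * β)⁻¹ * ε⁻¹)) ≤ 2 / Real.sqrt β := by
    rw [hεinv, hεdef, div_eq_mul_inv]
    have hsne : Real.sqrt β ≠ 0 := ne_of_gt hs0
    have hβinv : (4 * Real.pi * β)⁻¹ * Real.sqrt β = (4 * Real.pi * Real.sqrt β)⁻¹ := by
      rw [← hssq]
      field_simp
      simp only [Real.sq_sqrt hβ0.le]
    have h4 : (4 * Real.pi * β)⁻¹ ≤ (4 * Real.pi * Real.sqrt β)⁻¹ := by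
      apply inv_anti₀ (by positivity)
      have : Real.sqrt β ≤ β := by nlinarith
      nlinarith
    have h5 : (4 * Real.pi * Real.sqrt β)⁻¹ ≤ (Real.sqrt β)⁻¹ * (1/3) := by
      rw [mul_inv, mul_inv]
      rw [mul_comm]
      apply mul_le_mul_of_nonneg_left _ (by positivity)
      have h6 : (3:ℝ) ≤ 4 * Real.pi := by nlinarith
      calc (4:ℝ)⁻¹ * Real.pi⁻¹ = (4 * Real.pi)⁻¹ := by rw [mul_inv]
        _ ≤ (3:ℝ)⁻¹ := inv_anti₀ (by norm_num) h6
        _ = 1/3 := by norm_num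
    calc ε + ((4 * Real.pi * β)⁻¹ + 2 * ((4 * Real.pi * β)⁻¹ * Real.sqrt β))
        ≤ (Real.sqrt β)⁻¹ + ((Real.sqrt β)⁻¹ * (1/3) + 2 * ((Real.sqrt β)⁻¹ * (1/3))) := by
          rw [hεdef, hβinv]
          gcongr
          exact le_trans h4 h5
      _ = 2 * (Real.sqrt β)⁻¹ := by ring
  calc ‖vI β‖ ≤ ‖∫ v in (0:ℝ)..ε, e (β * v ^ 2)‖ + ‖∫ v in ε..1, e (β * v ^ 2)‖ := by
        rw [hsplit]; exact norm_add_le _ _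
    _ ≤ ε + ((4 * Real.pi * β)⁻¹ + 2 * ((4 * Real.pi * β)⁻¹ * ε⁻¹)) := add_le_add h1 h2
    _ ≤ 2 / Real.sqrt β := hfinal

noncomputable def G (β : ℝ) : ℝ := min 1 (8 * |β| ^ (-(3:ℝ)/2))

lemma G_nonneg : ∀ β : ℝ, 0 ≤ G β := by
  intro β
  apply le_min zero_le_one
  positivity

lemma rpow_three_half (b : ℝ) (hb : 0 ≤ b) : b ^ ((3:ℝ)/2) = (Real.sqrt b)^3 := by
  rw [Real.sqrt_eq_rpow, ← Real.rpow_natCast (b ^ ((1:ℝ)/2)) 3, ← Real.rpow_mul hb]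
  norm_num

lemma vI_cube_le {β : ℝ} (hβ : β ≠ 0) : ‖vI β‖ ^ 3 ≤ G β := by
  have habs : ‖vI β‖ = ‖vI |β|‖ := by
    rcases le_or_gt 0 β with h | h
    · rw [abs_of_nonneg h]
    · rw [abs_of_neg h, vI_neg_norm]
  have hb0 : 0 < |β| := abs_pos.2 hβ
  have hle1 : ‖vI β‖ ^ 3 ≤ 1 := by
    apply pow_le_one₀ (norm_nonneg _) (vI_norm_le_one β)
  have hexp : |β| ^ (-(3:ℝ)/2) = (|β| ^ ((3:ℝ)/2))⁻¹ := by
    rw [show (-(3:ℝ)/2) = -((3:ℝ)/2) by norm_num, Real.rpow_neg (abs_nonneg β)]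
  rcases le_or_gt 4 |β| with h4 | h4
  · apply le_min hle1
    have hd : ‖vI |β|‖ ≤ 2 / Real.sqrt |β| := vI_decay h4
    have hs0 : 0 < Real.sqrt |β| := Real.sqrt_pos.2 hb0
    calc ‖vI β‖ ^ 3 ≤ (2 / Real.sqrt |β|)^3 := by
          rw [habs]
          exact pow_le_pow_left₀ (norm_nonneg _) hd 3
      _ = 8 / (Real.sqrt |β|)^3 := by rw [div_pow]; norm_num
      _ = 8 * |β| ^ (-(3:ℝ)/2) := by
          rw [hexp, rpow_three_half _ (abs_nonneg β), div_eq_mul_inv]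
  · apply le_min hle1
    have h8 : (1:ℝ) ≤ 8 * |β| ^ (-(3:ℝ)/2) := by
      rw [hexp, show (8:ℝ) * (|β| ^ ((3:ℝ)/2))⁻¹ = 8 / (|β| ^ ((3:ℝ)/2)) from (div_eq_mul_inv 8 _).symm,
        le_div_iff₀ (by positivity), one_mul]
      calc |β| ^ ((3:ℝ)/2) ≤ (4:ℝ) ^ ((3:ℝ)/2) :=
            Real.rpow_le_rpow (abs_nonneg β) (le_of_lt h4) (by norm_num)
        _ = 8 := by
            rw [rpow_three_half 4 (by norm_num)]
            have h42 : Real.sqrt 4 = 2 := by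
              rw [show (4:ℝ) = 2^2 by norm_num]
              exact Real.sqrt_sq (by norm_num)
            rw [h42]
            norm_num
    linarith [hle1]

lemma G_measurable : Measurable G := by
  unfold G
  measurability

lemma G_integrable : Integrable G := by
  have hmeas : AEStronglyMeasurable G volume := G_measurable.aestronglyMeasurable
  have h1 : IntegrableOn G (Icc (-4:ℝ) 4) := by
    apply Integrable.mono' (integrable_const (1:ℝ)) hmeas.restrict
    apply ae_of_all
    intro β
    rw [Real.norm_eq_abs, abs_of_nonneg (G_nonneg β)]
    exact min_le_left _ _
  have h2 : IntegrableOn G (Ioi (4:ℝ)) := by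
    have hbase : IntegrableOn (fun β : ℝ => 8 * β ^ (-(3:ℝ)/2)) (Ioi (4:ℝ)) :=
      (integrableOn_Ioi_rpow_of_lt (by norm_num : (-(3:ℝ)/2) < -1) (by norm_num : (0:ℝ) < 4)).const_mul 8
    apply Integrable.mono' hbase hmeas.restrict
    rw [ae_restrict_iff' measurableSet_Ioi]
    apply ae_of_all
    intro β hβ
    rw [Real.norm_eq_abs, abs_of_nonneg (G_nonneg β)]
    calc G β ≤ 8 * |β| ^ (-(3:ℝ)/2) := min_le_right _ _
      _ = 8 * β ^ (-(3:ℝ)/2) := by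
          rw [abs_of_pos (lt_trans (by norm_num) (mem_Ioi.1 hβ))]
  have h3 : IntegrableOn G (Iio (-4:ℝ)) := by
    have hemb : MeasurableEmbedding (fun β : ℝ => -β) := (Homeomorph.neg ℝ).measurableEmbedding
    have hmp : MeasurePreserving (fun β : ℝ => -β) volume volume := Measure.measurePreserving_neg volume
    have key := (hmp.integrableOn_comp_preimage hemb (s := Ioi (4:ℝ))).2 h2
    have hset : (fun β : ℝ => -β) ⁻¹' (Ioi (4:ℝ)) = Iio (-4:ℝ) := by
      ext β; simp [lt_neg]
    have hfun : (G ∘ fun β : ℝ => -β) = G := by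
      funext β; simp [Function.comp, G, abs_neg]
    rwa [hset, hfun] at key
  have hsub : (univ : Set ℝ) ⊆ Iio (-4:ℝ) ∪ (Icc (-4:ℝ) 4 ∪ Ioi (4:ℝ)) := by
    intro β _
    rcases lt_or_ge β (-4) with h | h
    · exact Or.inl h
    · rcases le_or_gt β 4 with h' | h'
      · exact Or.inr (Or.inl ⟨h, h'⟩)
      · exact Or.inr (Or.inr h')
  rw [← integrableOn_univ]
  exact (h3.union (h1.union h2)).mono_set hsub

lemma abslog_bound {δ t : ℝ} (hδ0 : 0 < δ) (hδ1 : δ ≤ 1) (ht : t ∈ Set.Ioc 0 δ)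
    {i : ℕ} (hi : i ≤ 2) :
    |Real.log t| ^ i ≤ 2 + 4 * (Real.log δ)^2 + 64 * (δ ^ ((1:ℝ)/2) * t ^ (-(1:ℝ)/2)) := by
  obtain ⟨ht0, htδ⟩ := ht
  have hdt1 : (1:ℝ) ≤ δ / t := (one_le_div ht0).2 htδ
  have hdt0 : (0:ℝ) < δ / t := lt_of_lt_of_le one_pos hdt1
  -- log (δ/t) ≤ 4 (δ/t)^{1/4}
  have hs0 : (0:ℝ) < (δ/t) ^ ((1:ℝ)/4) := Real.rpow_pos_of_pos hdt0 _
  have hlog4 : Real.log (δ/t) ≤ 4 * (δ/t) ^ ((1:ℝ)/4) := by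
    have h1 : Real.log ((δ/t) ^ ((1:ℝ)/4)) = (1/4) * Real.log (δ/t) := Real.log_rpow hdt0 _
    have h2 : Real.log ((δ/t) ^ ((1:ℝ)/4)) ≤ (δ/t) ^ ((1:ℝ)/4) - 1 :=
      Real.log_le_sub_one_of_pos hs0
    nlinarith
  have hlognn : 0 ≤ Real.log (δ/t) := Real.log_nonneg hdt1
  -- (log(δ/t))² ≤ 16 (δ/t)^{1/2}
  have hsq : (Real.log (δ/t))^2 ≤ 16 * (δ/t) ^ ((1:ℝ)/2) := by
    have h3 : ((δ/t) ^ ((1:ℝ)/4))^2 = (δ/t) ^ ((1:ℝ)/2) := by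
      rw [← Real.rpow_natCast ((δ/t) ^ ((1:ℝ)/4)) 2, ← Real.rpow_mul (le_of_lt hdt0)]
      norm_num
    nlinarith
  have hsplit : (δ/t) ^ ((1:ℝ)/2) = δ ^ ((1:ℝ)/2) * t ^ (-(1:ℝ)/2) := by
    rw [Real.div_rpow (le_of_lt hδ0) (le_of_lt ht0), div_eq_mul_inv,
      show (-(1:ℝ)/2) = -((1:ℝ)/2) by norm_num, Real.rpow_neg (le_of_lt ht0)]
  -- (log t)² ≤ 2 (log δ)² + 32 (δ/t)^{1/2}
  have hlt : Real.log t = Real.log δ - Real.log (δ/t) := by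
    rw [Real.log_div (ne_of_gt hδ0) (ne_of_gt ht0)]; ring
  have hkey : (Real.log t)^2 ≤ 2 * (Real.log δ)^2 + 32 * (δ ^ ((1:ℝ)/2) * t ^ (-(1:ℝ)/2)) := by
    rw [← hsplit, hlt]
    nlinarith [sq_nonneg (Real.log δ + Real.log (δ/t))]
  have hX : 0 ≤ δ ^ ((1:ℝ)/2) * t ^ (-(1:ℝ)/2) := by positivity
  interval_cases i
  · simp only [pow_zero]
    nlinarith [sq_nonneg (Real.log δ)]
  · simp only [pow_one]
    nlinarith [sq_abs (Real.log t), sq_nonneg (|Real.log t| - 1), sq_nonneg (Real.log δ)]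
  · rw [sq_abs]
    nlinarith [sq_nonneg (Real.log δ)]

lemma uI_bound {δ : ℝ} (hδ0 : 0 < δ) (hδ1 : δ ≤ 1) {i : ℕ} (hi : i ≤ 2) (β : ℝ) :
    ‖∫ u in (0:ℝ)..δ, ((Real.log u : ℝ) : ℂ) ^ i * e (-(β * u))‖ ≤
      (130 + 4 * (Real.log δ)^2) * δ := by
  set g : ℝ → ℝ := fun u => 2 + 4 * (Real.log δ)^2 + 64 * (δ ^ ((1:ℝ)/2) * u ^ (-(1:ℝ)/2)) with hg
  have hrint : IntervalIntegrable (fun u : ℝ => u ^ (-(1:ℝ)/2)) volume 0 δ := by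
    apply intervalIntegral.intervalIntegrable_rpow'
    norm_num
  have hgint : IntervalIntegrable g volume 0 δ := by
    apply IntervalIntegrable.add (intervalIntegrable_const)
    exact (hrint.const_mul _).const_mul 64
  have hpt : ∀ᵐ t ∂(volume.restrict (Set.uIoc (0:ℝ) δ)),
      ‖((Real.log t : ℝ) : ℂ) ^ i * e (-(β * t))‖ ≤ g t := by
    rw [ae_restrict_iff' measurableSet_uIoc]
    apply ae_of_all
    intro t htm
    rw [Set.uIoc_of_le (le_of_lt hδ0)] at htm
    rw [norm_mul, norm_e, mul_one, norm_pow, Complex.norm_real, Real.norm_eq_abs]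
    exact abslog_bound hδ0 hδ1 htm hi
  have hmain := intervalIntegral.norm_integral_le_abs_of_norm_le hpt hgint
  have hrval : (∫ u in (0:ℝ)..δ, u ^ (-(1:ℝ)/2)) = 2 * δ ^ ((1:ℝ)/2) := by
    rw [integral_rpow (Or.inl (by norm_num : (-1:ℝ) < -1/2))]
    rw [Real.zero_rpow (by norm_num : (-1:ℝ)/2 + 1 ≠ 0)]
    norm_num
    ring
  have hgval : (∫ u in (0:ℝ)..δ, g u) = (2 + 4 * (Real.log δ)^2) * δ + 128 * δ := by
    rw [hg]
    rw [intervalIntegral.integral_add (intervalIntegrable_const) ((hrint.const_mul _).const_mul 64)]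
    rw [intervalIntegral.integral_const]
    rw [show (fun u : ℝ => 64 * (δ ^ ((1:ℝ)/2) * u ^ (-(1:ℝ)/2))) = fun u : ℝ =>
      (64 * δ ^ ((1:ℝ)/2)) * u ^ (-(1:ℝ)/2) by funext u; ring]
    rw [intervalIntegral.integral_const_mul, hrval]
    have hδδ : δ ^ ((1:ℝ)/2) * δ ^ ((1:ℝ)/2) = δ := by
      rw [← Real.rpow_add hδ0]; norm_num
    rw [sub_zero, smul_eq_mul]
    ring_nf
    nlinarith [hδδ]
  have hnn : (0:ℝ) ≤ (2 + 4 * (Real.log δ)^2) * δ + 128 * δ := by positivity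
  calc ‖∫ u in (0:ℝ)..δ, ((Real.log u : ℝ) : ℂ) ^ i * e (-(β * u))‖
      ≤ |∫ u in (0:ℝ)..δ, g u| := hmain
    _ = (2 + 4 * (Real.log δ)^2) * δ + 128 * δ := by rw [hgval, abs_of_nonneg hnn]
    _ ≤ (130 + 4 * (Real.log δ)^2) * δ := by nlinarith [sq_nonneg (Real.log δ)]

/-- `|R_ℓ(x)| ≪_ℓ x⁻¹ (log x)⁴` for `x ≥ 6` and `ℓ ∈ {0,1,2}`. -/
theorem Rrem_bound : ∀ ℓ : ℕ, ℓ ≤ 2 → ∃ C : ℝ, 0 < C ∧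
    ∀ x : ℝ, 6 ≤ x → ‖Rrem ℓ x‖ ≤ C * x⁻¹ * (Real.log x) ^ 4 := by
  intro ℓ hℓ
  set K : ℝ := ∫ β : ℝ, G β with hK
  have hK0 : 0 ≤ K := integral_nonneg G_nonneg
  refine ⟨4824 * (K + 1) + 1, by positivity, ?_⟩
  intro x hx
  have hx0 : (0:ℝ) < x := by linarith
  have hlog1 : (1:ℝ) ≤ Real.log x := by
    have h1 : Real.log (Real.exp 1) ≤ Real.log x := by
      apply Real.log_le_log (Real.exp_pos 1)
      have h9 := Real.exp_one_lt_d9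
      linarith
    rwa [Real.log_exp] at h1
  have hlog0 : (0:ℝ) ≤ Real.log x := by linarith
  set j₀ := ⌊Real.log x / Real.log 2⌋₊ with hj
  set δ : ℝ := 3 / 2 ^ j₀ with hδ
  have h2pos : (0:ℝ) < 2 ^ j₀ := by positivity
  have hδ0 : 0 < δ := by positivity
  have hlog2 : (0:ℝ) < Real.log 2 := Real.log_pos one_lt_two
  have h2j : (2:ℝ) ^ j₀ ≤ x := by
    have h1 : (j₀ : ℝ) ≤ Real.log x / Real.log 2 :=
      Nat.floor_le (div_nonneg hlog0 (le_of_lt hlog2))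
    have h2 : (j₀ : ℝ) * Real.log 2 ≤ Real.log x := by
      have := mul_le_mul_of_nonneg_right h1 (le_of_lt hlog2)
      rwa [div_mul_cancel₀ (Real.log x) (ne_of_gt hlog2)] at this
    have h3 : Real.log ((2:ℝ) ^ j₀) ≤ Real.log x := by
      rw [Real.log_pow]; exact h2
    exact (Real.log_le_log_iff h2pos hx0).1 h3
  have hxlt : x < (2:ℝ) ^ (j₀ + 1) := by
    have h1 : Real.log x / Real.log 2 < (j₀:ℝ) + 1 := by
      have := Nat.lt_floor_add_one (Real.log x / Real.log 2)
      push_cast at this ⊢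
      convert this using 2
    have h2 : Real.log x < ((j₀:ℝ) + 1) * Real.log 2 := by
      rw [div_lt_iff₀ hlog2] at h1; linarith
    have h3 : Real.log x < Real.log ((2:ℝ) ^ (j₀+1)) := by
      rw [Real.log_pow]; push_cast; linarith
    exact (Real.log_lt_log_iff hx0 (by positivity)).1 h3
  have hδ6 : δ ≤ 6 / x := by
    rw [hδ, div_le_div_iff₀ h2pos hx0]
    have h2' : (2:ℝ)^(j₀+1) = 2 * 2^j₀ := by ring
    nlinarith
  have hδ1 : δ ≤ 1 := le_trans hδ6 (by rw [div_le_one hx0]; linarith)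
  have hlogδ : (Real.log δ)^2 ≤ (Real.log x)^2 := by
    have hinvle : 1/δ ≤ x := by
      rw [hδ, one_div_div]
      calc (2:ℝ)^j₀ / 3 ≤ (2:ℝ)^j₀ := by
            rw [div_le_iff₀ (by norm_num)]; nlinarith
        _ ≤ x := h2j
    have h2 : Real.log (1/δ) ≤ Real.log x := Real.log_le_log (by positivity) hinvle
    have h3 : Real.log δ ≤ 0 := Real.log_nonpos (le_of_lt hδ0) hδ1
    have h4 : Real.log (1/δ) = - Real.log δ := by rw [one_div, Real.log_inv]
    nlinarith
  have hM : (130 + 4 * (Real.log δ)^2) * δ ≤ 804 * x⁻¹ * (Real.log x)^2 := by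
    have h1 : (130 + 4*(Real.log δ)^2) ≤ 134 * (Real.log x)^2 := by nlinarith
    calc (130 + 4*(Real.log δ)^2) * δ ≤ (134*(Real.log x)^2) * (6/x) := by
          apply mul_le_mul h1 hδ6 (le_of_lt hδ0) (by positivity)
      _ = 804 * x⁻¹ * (Real.log x)^2 := by field_simp; ring
  have hFbound : ∀ i : ℕ, i ≤ 2 →
      ‖∫ β : ℝ, (∫ u in (0:ℝ)..δ, ((Real.log u : ℝ) : ℂ) ^ i * e (-(β * u))) *
          (∫ v in (0:ℝ)..1, e (β * v ^ 2)) ^ 3‖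
        ≤ (804 * x⁻¹ * (Real.log x)^2) * K := by
    intro i hi
    set M : ℝ := (130 + 4 * (Real.log δ)^2) * δ with hMdef
    have hM0 : (0:ℝ) ≤ M := by positivity
    have hae : ∀ᵐ β : ℝ, ‖(∫ u in (0:ℝ)..δ, ((Real.log u : ℝ):ℂ)^i * e (-(β*u))) *
        (∫ v in (0:ℝ)..1, e (β * v ^ 2)) ^ 3‖ ≤ M * G β := by
      have hne : ∀ᵐ β : ℝ, β ≠ (0:ℝ) := by
        rw [ae_iff]
        have hset : {a : ℝ | ¬ a ≠ 0} = {(0:ℝ)} := by ext a; simp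
        rw [hset]
        exact measure_singleton 0
      filter_upwards [hne] with β hβ
      rw [norm_mul, norm_pow]
      have h1 := uI_bound hδ0 hδ1 hi β
      have h2 : ‖∫ v in (0:ℝ)..1, e (β * v ^ 2)‖ ^ 3 ≤ G β := vI_cube_le hβ
      exact mul_le_mul h1 h2 (by positivity) hM0
    calc ‖∫ β : ℝ, (∫ u in (0:ℝ)..δ, ((Real.log u : ℝ) : ℂ) ^ i * e (-(β * u))) *
            (∫ v in (0:ℝ)..1, e (β * v ^ 2)) ^ 3‖
        ≤ ∫ β : ℝ, ‖(∫ u in (0:ℝ)..δ, ((Real.log u : ℝ) : ℂ) ^ i * e (-(β * u))) *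
            (∫ v in (0:ℝ)..1, e (β * v ^ 2)) ^ 3‖ := norm_integral_le_integral_norm _
      _ ≤ ∫ β : ℝ, M * G β :=
          integral_mono_of_nonneg (ae_of_all _ (fun β => norm_nonneg _))
            (G_integrable.const_mul M) hae
      _ = M * K := by rw [MeasureTheory.integral_const_mul]
      _ ≤ (804 * x⁻¹ * (Real.log x)^2) * K := mul_le_mul_of_nonneg_right hM hK0
  -- assemble
  have habs : ‖Rrem ℓ x‖ = ‖Rrem ℓ x‖ := rfl
  rw [habs, Rrem, ← hj, ← hδ]
  have hterm : ∀ i ∈ Finset.range (ℓ+1),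
      ‖((ℓ.choose i : ℝ) : ℂ) * ((Real.log x : ℝ) : ℂ) ^ (ℓ - i) *
        ∫ β : ℝ, (∫ u in (0:ℝ)..δ, ((Real.log u : ℝ) : ℂ) ^ i * e (-(β * u))) *
          (∫ v in (0:ℝ)..1, e (β * v ^ 2)) ^ 3‖
      ≤ 1608 * K * (x⁻¹ * (Real.log x)^4) := by
    intro i him
    have hiℓ : i ≤ ℓ := Nat.le_of_lt_succ (Finset.mem_range.1 him)
    have hi2 : i ≤ 2 := le_trans hiℓ hℓ
    have hchoose : (ℓ.choose i : ℝ) ≤ 2 := by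
      have : ℓ.choose i ≤ 2 := by
        interval_cases ℓ <;> interval_cases i <;> decide
      exact_mod_cast this
    have hN := hFbound i hi2
    rw [norm_mul, norm_mul, norm_pow, Complex.norm_real, Complex.norm_real,
      Real.norm_eq_abs, Real.norm_eq_abs, abs_of_nonneg (by positivity : (0:ℝ) ≤ (ℓ.choose i : ℝ)),
      abs_of_nonneg hlog0]
    have hp : (Real.log x)^(ℓ-i) * (Real.log x)^2 ≤ (Real.log x)^4 := by
      rw [← pow_add]
      apply pow_le_pow_right₀ hlog1 (by omega)
    calc (ℓ.choose i : ℝ) * (Real.log x)^(ℓ-i) *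
          ‖∫ β : ℝ, (∫ u in (0:ℝ)..δ, ((Real.log u : ℝ) : ℂ) ^ i * e (-(β * u))) *
            (∫ v in (0:ℝ)..1, e (β * v ^ 2)) ^ 3‖
        ≤ 2 * (Real.log x)^(ℓ-i) * ((804 * x⁻¹ * (Real.log x)^2) * K) := by
          apply mul_le_mul _ hN (norm_nonneg _) (by positivity)
          exact mul_le_mul_of_nonneg_right hchoose (by positivity)
      _ = 1608 * K * (x⁻¹ * ((Real.log x)^(ℓ-i) * (Real.log x)^2)) := by ring
      _ ≤ 1608 * K * (x⁻¹ * (Real.log x)^4) := by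
          apply mul_le_mul_of_nonneg_left _ (by positivity)
          exact mul_le_mul_of_nonneg_left hp (by positivity)
  calc ‖∑ i ∈ Finset.range (ℓ + 1),
        ((ℓ.choose i : ℝ) : ℂ) * ((Real.log x : ℝ) : ℂ) ^ (ℓ - i) *
          ∫ β : ℝ, (∫ u in (0:ℝ)..δ, ((Real.log u : ℝ) : ℂ) ^ i * e (-(β * u))) *
            (∫ v in (0:ℝ)..1, e (β * v ^ 2)) ^ 3‖
      ≤ ∑ i ∈ Finset.range (ℓ + 1),
        ‖((ℓ.choose i : ℝ) : ℂ) * ((Real.log x : ℝ) : ℂ) ^ (ℓ - i) *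
          ∫ β : ℝ, (∫ u in (0:ℝ)..δ, ((Real.log u : ℝ) : ℂ) ^ i * e (-(β * u))) *
            (∫ v in (0:ℝ)..1, e (β * v ^ 2)) ^ 3‖ := norm_sum_le _ _
    _ ≤ (Finset.range (ℓ + 1)).card • (1608 * K * (x⁻¹ * (Real.log x)^4)) :=
        Finset.sum_le_card_nsmul _ _ _ hterm
    _ = ((ℓ:ℝ) + 1) * (1608 * K * (x⁻¹ * (Real.log x)^4)) := by
        rw [Finset.card_range, nsmul_eq_mul]; push_cast; ring
    _ ≤ 3 * (1608 * K * (x⁻¹ * (Real.log x)^4)) := by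
        apply mul_le_mul_of_nonneg_right _ (by positivity)
        have : (ℓ:ℝ) ≤ 2 := by exact_mod_cast hℓ
        linarith
    _ ≤ (4824 * (K + 1) + 1) * x⁻¹ * (Real.log x)^4 := by
        have h0 : (0:ℝ) ≤ x⁻¹ * (Real.log x)^4 := by positivity
        nlinarith
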